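/- Define f(s) = 2 + e^{-3s}(s+1)(1 - s²/2 - s³/3 - s⁴/8) + e^{-2s}(2s + 5s²/2 + s³/2) - e^{-s}(3 + 2s). Then f(s) < 1 for all s in the interval [0, 1.26575]. -/
import Mathlib

set_option maxHeartbeats 1000000

open Real in
private lemma expb12 (x : ℝ) (hx : |x| ≤ 1) :
    |Real.exp x - (1 + x + x^2/2 + x^3/6 + x^4/24 + x^5/120 + x^6/720 + x^7/5040
      + x^8/40320 + x^9/362880 + x^10/3628800 + x^11/39916800)|
      ≤ |x|^12 * (13 / (479001600 * 12)) := by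
  have h := Real.exp_bound hx (n := 12) (by norm_num)
  simp [Finset.sum_range_succ, Nat.factorial] at h ⊢
  convert h using 2

private lemma exp_of_neg_bounds (x : ℝ) (h0 : -1 ≤ x) (h1 : x ≤ 0) :
    1 + x + x^2/2 + x^3/6 + x^4/24 + x^5/120 + x^6/720 + x^7/5040
      + x^8/40320 + x^9/362880 + x^10/3628800 + x^11/39916800 - x^12/395107200
      ≤ Real.exp x ∧
    Real.exp x ≤ 1 + x + x^2/2 + x^3/6 + x^4/24 + x^5/120 + x^6/720 + x^7/5040
      + x^8/40320 + x^9/362880 + x^10/3628800 + x^11/39916800 + x^12/395107200 := by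
  have h := expb12 x (by rw [abs_of_nonpos h1]; linarith)
  rw [abs_of_nonpos h1, abs_le, show ((-x)^12 : ℝ) = x^12 from by ring] at h
  constructor <;> nlinarith [h.1, h.2]

private lemma e05_lo : (0.60653:ℝ) ≤ Real.exp (-0.5) := by
  have h := (exp_of_neg_bounds (-0.5) (by norm_num) (by norm_num)).1
  norm_num at h ⊢; linarith

private lemma e05_hi : Real.exp (-0.5) ≤ 0.6065307 := by
  have h := (exp_of_neg_bounds (-0.5) (by norm_num) (by norm_num)).2
  norm_num at h ⊢; linarith

private lemma e08_lo : (0.449328:ℝ) ≤ Real.exp (-0.8) := by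
  have h := (exp_of_neg_bounds (-0.8) (by norm_num) (by norm_num)).1
  norm_num at h ⊢; linarith

private lemma e08_hi : Real.exp (-0.8) ≤ 0.449330 := by
  have h := (exp_of_neg_bounds (-0.8) (by norm_num) (by norm_num)).2
  norm_num at h ⊢; linarith

private lemma e10_lo : (0.367879:ℝ) ≤ Real.exp (-1) := by
  have h := (exp_of_neg_bounds (-1) (by norm_num) (by norm_num)).1
  norm_num at h ⊢; linarith

private lemma e10_hi : Real.exp (-1) ≤ 0.3678795 := by
  have h := (exp_of_neg_bounds (-1) (by norm_num) (by norm_num)).2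
  norm_num at h ⊢; linarith

private lemma e06_lo : (0.5488116360:ℝ) ≤ Real.exp (-0.6) := by
  have h := (exp_of_neg_bounds (-0.6) (by norm_num) (by norm_num)).1
  norm_num at h ⊢; linarith

private lemma e06_hi : Real.exp (-0.6) ≤ 0.5488116361 := by
  have h := (exp_of_neg_bounds (-0.6) (by norm_num) (by norm_num)).2
  norm_num at h ⊢; linarith

private lemma ehc_lo : (0.5310627985:ℝ) ≤ Real.exp (-0.632875) := by
  have h := (exp_of_neg_bounds (-0.632875) (by norm_num) (by norm_num)).1
  norm_num at h ⊢; linarith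

private lemma e12_lo : (0.301194:ℝ) ≤ Real.exp (-1.2) := by
  rw [show (-1.2:ℝ) = -0.6 + -0.6 by norm_num, Real.exp_add]
  nlinarith [e06_lo, Real.exp_pos (-0.6)]

private lemma e12_hi : Real.exp (-1.2) ≤ 0.3011943 := by
  rw [show (-1.2:ℝ) = -0.6 + -0.6 by norm_num, Real.exp_add]
  nlinarith [e06_hi, Real.exp_pos (-0.6)]

private lemma ec_lo : (0.2820276:ℝ) ≤ Real.exp (-1.26575) := by
  rw [show (-1.26575:ℝ) = -0.632875 + -0.632875 by norm_num, Real.exp_add]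
  nlinarith [ehc_lo, Real.exp_pos (-0.632875)]

private lemma box1 (s x : ℝ) (h0 : 0 ≤ s) (h1 : s ≤ 0.5) (hl : 0.60653 ≤ x) (hu : x ≤ 1) :
    2 + x^3 * (s+1) * (1 - s^2/2 - s^3/3 - s^4/8)
      + x^2 * (2*s + 5*s^2/2 + s^3/2) - x * (3 + 2*s) < 1 := by
  have ns : (0:ℝ) ≤ s := by linarith
  have hx : (0:ℝ) ≤ x := by linarith
  have n1 : (0:ℝ) ≤ (s - 0) := by linarith
  have n2 : (0:ℝ) ≤ (0.5 - s) := by linarith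
  have n3 : (0:ℝ) ≤ (x - 0.60653) := by linarith
  have n4 : (0:ℝ) ≤ (1 - x) := by linarith
  have p0 : (0:ℝ) ≤ (s - 0) * (0.5 - s) * (s^0 * x^1) :=
    mul_nonneg (mul_nonneg n1 n2) (mul_nonneg (pow_nonneg ns 0) (pow_nonneg hx 1))
  have p1 : (0:ℝ) ≤ (s - 0) * (0.5 - s) * (s^0 * x^2) :=
    mul_nonneg (mul_nonneg n1 n2) (mul_nonneg (pow_nonneg ns 0) (pow_nonneg hx 2))
  have p2 : (0:ℝ) ≤ (s - 0) * (0.5 - s) * (s^0 * x^3) :=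
    mul_nonneg (mul_nonneg n1 n2) (mul_nonneg (pow_nonneg ns 0) (pow_nonneg hx 3))
  have p3 : (0:ℝ) ≤ (s - 0) * (0.5 - s) * (s^1 * x^2) :=
    mul_nonneg (mul_nonneg n1 n2) (mul_nonneg (pow_nonneg ns 1) (pow_nonneg hx 2))
  have p4 : (0:ℝ) ≤ (s - 0) * (x - 0.60653) * (s^0 * x^0) :=
    mul_nonneg (mul_nonneg n1 n3) (mul_nonneg (pow_nonneg ns 0) (pow_nonneg hx 0))
  have p5 : (0:ℝ) ≤ (s - 0) * (1 - x) * (s^0 * x^1) :=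
    mul_nonneg (mul_nonneg n1 n4) (mul_nonneg (pow_nonneg ns 0) (pow_nonneg hx 1))
  have p6 : (0:ℝ) ≤ (s - 0) * (1 - x) * (s^0 * x^2) :=
    mul_nonneg (mul_nonneg n1 n4) (mul_nonneg (pow_nonneg ns 0) (pow_nonneg hx 2))
  have p7 : (0:ℝ) ≤ (0.5 - s) * (0.5 - s) * (s^0 * x^1) :=
    mul_nonneg (mul_nonneg n2 n2) (mul_nonneg (pow_nonneg ns 0) (pow_nonneg hx 1))
  have p8 : (0:ℝ) ≤ (0.5 - s) * (0.5 - s) * (s^0 * x^3) :=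
    mul_nonneg (mul_nonneg n2 n2) (mul_nonneg (pow_nonneg ns 0) (pow_nonneg hx 3))
  have p9 : (0:ℝ) ≤ (0.5 - s) * (0.5 - s) * (s^1 * x^3) :=
    mul_nonneg (mul_nonneg n2 n2) (mul_nonneg (pow_nonneg ns 1) (pow_nonneg hx 3))
  have p10 : (0:ℝ) ≤ (0.5 - s) * (0.5 - s) * (s^2 * x^3) :=
    mul_nonneg (mul_nonneg n2 n2) (mul_nonneg (pow_nonneg ns 2) (pow_nonneg hx 3))
  have p11 : (0:ℝ) ≤ (0.5 - s) * (0.5 - s) * (s^3 * x^3) :=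
    mul_nonneg (mul_nonneg n2 n2) (mul_nonneg (pow_nonneg ns 3) (pow_nonneg hx 3))
  have p12 : (0:ℝ) ≤ (0.5 - s) * (x - 0.60653) * (s^0 * x^0) :=
    mul_nonneg (mul_nonneg n2 n3) (mul_nonneg (pow_nonneg ns 0) (pow_nonneg hx 0))
  have p13 : (0:ℝ) ≤ (0.5 - s) * (1 - x) * (s^0 * x^2) :=
    mul_nonneg (mul_nonneg n2 n4) (mul_nonneg (pow_nonneg ns 0) (pow_nonneg hx 2))
  have p14 : (0:ℝ) ≤ (x - 0.60653) * (1 - x) * (s^0 * x^0) :=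
    mul_nonneg (mul_nonneg n3 n4) (mul_nonneg (pow_nonneg ns 0) (pow_nonneg hx 0))
  linarith [p0, p1, p2, p3, p4, p5, p6, p7, p8, p9, p10, p11, p12, p13, p14]

private lemma box2a (s x : ℝ) (h0 : 0.5 ≤ s) (h1 : s ≤ 0.8) (hl : 0.449328 ≤ x) (hu : x ≤ 0.6065307) :
    2 + x^3 * (s+1) * (1 - s^2/2 - s^3/3 - s^4/8)
      + x^2 * (2*s + 5*s^2/2 + s^3/2) - x * (3 + 2*s) < 1 := by
  have ns : (0:ℝ) ≤ s := by linarith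
  have hx : (0:ℝ) ≤ x := by linarith
  have n1 : (0:ℝ) ≤ (s - 0.5) := by linarith
  have n2 : (0:ℝ) ≤ (0.8 - s) := by linarith
  have n3 : (0:ℝ) ≤ (x - 0.449328) := by linarith
  have n4 : (0:ℝ) ≤ (0.6065307 - x) := by linarith
  have p0 : (0:ℝ) ≤ (s - 0.5) * (0.8 - s) * (s^0 * x^1) :=
    mul_nonneg (mul_nonneg n1 n2) (mul_nonneg (pow_nonneg ns 0) (pow_nonneg hx 1))
  have p1 : (0:ℝ) ≤ (s - 0.5) * (0.8 - s) * (s^0 * x^2) :=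
    mul_nonneg (mul_nonneg n1 n2) (mul_nonneg (pow_nonneg ns 0) (pow_nonneg hx 2))
  have p2 : (0:ℝ) ≤ (s - 0.5) * (0.8 - s) * (s^1 * x^2) :=
    mul_nonneg (mul_nonneg n1 n2) (mul_nonneg (pow_nonneg ns 1) (pow_nonneg hx 2))
  have p3 : (0:ℝ) ≤ (s - 0.5) * (x - 0.449328) * (s^0 * x^0) :=
    mul_nonneg (mul_nonneg n1 n3) (mul_nonneg (pow_nonneg ns 0) (pow_nonneg hx 0))
  have p4 : (0:ℝ) ≤ (s - 0.5) * (0.6065307 - x) * (s^0 * x^1) :=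
    mul_nonneg (mul_nonneg n1 n4) (mul_nonneg (pow_nonneg ns 0) (pow_nonneg hx 1))
  have p5 : (0:ℝ) ≤ (s - 0.5) * (0.6065307 - x) * (s^0 * x^2) :=
    mul_nonneg (mul_nonneg n1 n4) (mul_nonneg (pow_nonneg ns 0) (pow_nonneg hx 2))
  have p6 : (0:ℝ) ≤ (0.8 - s) * (0.8 - s) * (s^0 * x^1) :=
    mul_nonneg (mul_nonneg n2 n2) (mul_nonneg (pow_nonneg ns 0) (pow_nonneg hx 1))
  have p7 : (0:ℝ) ≤ (0.8 - s) * (0.8 - s) * (s^0 * x^3) :=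
    mul_nonneg (mul_nonneg n2 n2) (mul_nonneg (pow_nonneg ns 0) (pow_nonneg hx 3))
  have p8 : (0:ℝ) ≤ (0.8 - s) * (0.8 - s) * (s^1 * x^3) :=
    mul_nonneg (mul_nonneg n2 n2) (mul_nonneg (pow_nonneg ns 1) (pow_nonneg hx 3))
  have p9 : (0:ℝ) ≤ (0.8 - s) * (0.8 - s) * (s^2 * x^3) :=
    mul_nonneg (mul_nonneg n2 n2) (mul_nonneg (pow_nonneg ns 2) (pow_nonneg hx 3))
  have p10 : (0:ℝ) ≤ (0.8 - s) * (0.8 - s) * (s^3 * x^3) :=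
    mul_nonneg (mul_nonneg n2 n2) (mul_nonneg (pow_nonneg ns 3) (pow_nonneg hx 3))
  have p11 : (0:ℝ) ≤ (0.8 - s) * (x - 0.449328) * (s^0 * x^0) :=
    mul_nonneg (mul_nonneg n2 n3) (mul_nonneg (pow_nonneg ns 0) (pow_nonneg hx 0))
  have p12 : (0:ℝ) ≤ (0.8 - s) * (0.6065307 - x) * (s^0 * x^1) :=
    mul_nonneg (mul_nonneg n2 n4) (mul_nonneg (pow_nonneg ns 0) (pow_nonneg hx 1))
  have p13 : (0:ℝ) ≤ (0.8 - s) * (0.6065307 - x) * (s^0 * x^2) :=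
    mul_nonneg (mul_nonneg n2 n4) (mul_nonneg (pow_nonneg ns 0) (pow_nonneg hx 2))
  have p14 : (0:ℝ) ≤ (x - 0.449328) * (0.6065307 - x) * (s^0 * x^0) :=
    mul_nonneg (mul_nonneg n3 n4) (mul_nonneg (pow_nonneg ns 0) (pow_nonneg hx 0))
  linarith [p0, p1, p2, p3, p4, p5, p6, p7, p8, p9, p10, p11, p12, p13, p14]

private lemma box2b (s x : ℝ) (h0 : 0.8 ≤ s) (h1 : s ≤ 1.0) (hl : 0.367879 ≤ x) (hu : x ≤ 0.449330) :
    2 + x^3 * (s+1) * (1 - s^2/2 - s^3/3 - s^4/8)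
      + x^2 * (2*s + 5*s^2/2 + s^3/2) - x * (3 + 2*s) < 1 := by
  have ns : (0:ℝ) ≤ s := by linarith
  have hx : (0:ℝ) ≤ x := by linarith
  have n1 : (0:ℝ) ≤ (s - 0.8) := by linarith
  have n2 : (0:ℝ) ≤ (1.0 - s) := by linarith
  have n3 : (0:ℝ) ≤ (x - 0.367879) := by linarith
  have n4 : (0:ℝ) ≤ (0.449330 - x) := by linarith
  have p0 : (0:ℝ) ≤ (s - 0.8) * (s - 0.8) * (s^2 * x^3) :=
    mul_nonneg (mul_nonneg n1 n1) (mul_nonneg (pow_nonneg ns 2) (pow_nonneg hx 3))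
  have p1 : (0:ℝ) ≤ (s - 0.8) * (s - 0.8) * (s^3 * x^3) :=
    mul_nonneg (mul_nonneg n1 n1) (mul_nonneg (pow_nonneg ns 3) (pow_nonneg hx 3))
  have p2 : (0:ℝ) ≤ (s - 0.8) * (1.0 - s) * (s^0 * x^1) :=
    mul_nonneg (mul_nonneg n1 n2) (mul_nonneg (pow_nonneg ns 0) (pow_nonneg hx 1))
  have p3 : (0:ℝ) ≤ (s - 0.8) * (1.0 - s) * (s^0 * x^2) :=
    mul_nonneg (mul_nonneg n1 n2) (mul_nonneg (pow_nonneg ns 0) (pow_nonneg hx 2))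
  have p4 : (0:ℝ) ≤ (s - 0.8) * (1.0 - s) * (s^1 * x^2) :=
    mul_nonneg (mul_nonneg n1 n2) (mul_nonneg (pow_nonneg ns 1) (pow_nonneg hx 2))
  have p5 : (0:ℝ) ≤ (s - 0.8) * (x - 0.367879) * (s^0 * x^0) :=
    mul_nonneg (mul_nonneg n1 n3) (mul_nonneg (pow_nonneg ns 0) (pow_nonneg hx 0))
  have p6 : (0:ℝ) ≤ (s - 0.8) * (x - 0.367879) * (s^2 * x^2) :=
    mul_nonneg (mul_nonneg n1 n3) (mul_nonneg (pow_nonneg ns 2) (pow_nonneg hx 2))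
  have p7 : (0:ℝ) ≤ (s - 0.8) * (0.449330 - x) * (s^0 * x^1) :=
    mul_nonneg (mul_nonneg n1 n4) (mul_nonneg (pow_nonneg ns 0) (pow_nonneg hx 1))
  have p8 : (0:ℝ) ≤ (s - 0.8) * (0.449330 - x) * (s^0 * x^2) :=
    mul_nonneg (mul_nonneg n1 n4) (mul_nonneg (pow_nonneg ns 0) (pow_nonneg hx 2))
  have p9 : (0:ℝ) ≤ (1.0 - s) * (1.0 - s) * (s^0 * x^1) :=
    mul_nonneg (mul_nonneg n2 n2) (mul_nonneg (pow_nonneg ns 0) (pow_nonneg hx 1))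
  have p10 : (0:ℝ) ≤ (1.0 - s) * (1.0 - s) * (s^0 * x^3) :=
    mul_nonneg (mul_nonneg n2 n2) (mul_nonneg (pow_nonneg ns 0) (pow_nonneg hx 3))
  have p11 : (0:ℝ) ≤ (1.0 - s) * (1.0 - s) * (s^1 * x^3) :=
    mul_nonneg (mul_nonneg n2 n2) (mul_nonneg (pow_nonneg ns 1) (pow_nonneg hx 3))
  have p12 : (0:ℝ) ≤ (1.0 - s) * (x - 0.367879) * (s^0 * x^0) :=
    mul_nonneg (mul_nonneg n2 n3) (mul_nonneg (pow_nonneg ns 0) (pow_nonneg hx 0))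
  have p13 : (0:ℝ) ≤ (1.0 - s) * (0.449330 - x) * (s^0 * x^1) :=
    mul_nonneg (mul_nonneg n2 n4) (mul_nonneg (pow_nonneg ns 0) (pow_nonneg hx 1))
  have p14 : (0:ℝ) ≤ (1.0 - s) * (0.449330 - x) * (s^0 * x^2) :=
    mul_nonneg (mul_nonneg n2 n4) (mul_nonneg (pow_nonneg ns 0) (pow_nonneg hx 2))
  linarith [p0, p1, p2, p3, p4, p5, p6, p7, p8, p9, p10, p11, p12, p13, p14]

private lemma box2c (s x : ℝ) (h0 : 1.0 ≤ s) (h1 : s ≤ 1.2) (hl : 0.301194 ≤ x) (hu : x ≤ 0.3678795) :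
    2 + x^3 * (s+1) * (1 - s^2/2 - s^3/3 - s^4/8)
      + x^2 * (2*s + 5*s^2/2 + s^3/2) - x * (3 + 2*s) < 1 := by
  have ns : (0:ℝ) ≤ s := by linarith
  have hx : (0:ℝ) ≤ x := by linarith
  have n1 : (0:ℝ) ≤ (s - 1.0) := by linarith
  have n2 : (0:ℝ) ≤ (1.2 - s) := by linarith
  have n3 : (0:ℝ) ≤ (x - 0.301194) := by linarith
  have n4 : (0:ℝ) ≤ (0.3678795 - x) := by linarith
  have p0 : (0:ℝ) ≤ (s - 1.0) * (s - 1.0) * (s^0 * x^0) :=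
    mul_nonneg (mul_nonneg n1 n1) (mul_nonneg (pow_nonneg ns 0) (pow_nonneg hx 0))
  have p1 : (0:ℝ) ≤ (s - 1.0) * (s - 1.0) * (s^1 * x^2) :=
    mul_nonneg (mul_nonneg n1 n1) (mul_nonneg (pow_nonneg ns 1) (pow_nonneg hx 2))
  have p2 : (0:ℝ) ≤ (s - 1.0) * (s - 1.0) * (s^1 * x^3) :=
    mul_nonneg (mul_nonneg n1 n1) (mul_nonneg (pow_nonneg ns 1) (pow_nonneg hx 3))
  have p3 : (0:ℝ) ≤ (s - 1.0) * (s - 1.0) * (s^2 * x^2) :=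
    mul_nonneg (mul_nonneg n1 n1) (mul_nonneg (pow_nonneg ns 2) (pow_nonneg hx 2))
  have p4 : (0:ℝ) ≤ (s - 1.0) * (s - 1.0) * (s^2 * x^3) :=
    mul_nonneg (mul_nonneg n1 n1) (mul_nonneg (pow_nonneg ns 2) (pow_nonneg hx 3))
  have p5 : (0:ℝ) ≤ (s - 1.0) * (s - 1.0) * (s^3 * x^3) :=
    mul_nonneg (mul_nonneg n1 n1) (mul_nonneg (pow_nonneg ns 3) (pow_nonneg hx 3))
  have p6 : (0:ℝ) ≤ (s - 1.0) * (1.2 - s) * (s^0 * x^2) :=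
    mul_nonneg (mul_nonneg n1 n2) (mul_nonneg (pow_nonneg ns 0) (pow_nonneg hx 2))
  have p7 : (0:ℝ) ≤ (s - 1.0) * (1.2 - s) * (s^1 * x^0) :=
    mul_nonneg (mul_nonneg n1 n2) (mul_nonneg (pow_nonneg ns 1) (pow_nonneg hx 0))
  have p8 : (0:ℝ) ≤ (s - 1.0) * (1.2 - s) * (s^1 * x^1) :=
    mul_nonneg (mul_nonneg n1 n2) (mul_nonneg (pow_nonneg ns 1) (pow_nonneg hx 1))
  have p9 : (0:ℝ) ≤ (s - 1.0) * (x - 0.301194) * (s^0 * x^0) :=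
    mul_nonneg (mul_nonneg n1 n3) (mul_nonneg (pow_nonneg ns 0) (pow_nonneg hx 0))
  have p10 : (0:ℝ) ≤ (s - 1.0) * (0.3678795 - x) * (s^0 * x^1) :=
    mul_nonneg (mul_nonneg n1 n4) (mul_nonneg (pow_nonneg ns 0) (pow_nonneg hx 1))
  have p11 : (0:ℝ) ≤ (s - 1.0) * (0.3678795 - x) * (s^1 * x^1) :=
    mul_nonneg (mul_nonneg n1 n4) (mul_nonneg (pow_nonneg ns 1) (pow_nonneg hx 1))
  have p12 : (0:ℝ) ≤ (1.2 - s) * (1.2 - s) * (s^1 * x^0) :=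
    mul_nonneg (mul_nonneg n2 n2) (mul_nonneg (pow_nonneg ns 1) (pow_nonneg hx 0))
  have p13 : (0:ℝ) ≤ (1.2 - s) * (x - 0.301194) * (s^0 * x^0) :=
    mul_nonneg (mul_nonneg n2 n3) (mul_nonneg (pow_nonneg ns 0) (pow_nonneg hx 0))
  have p14 : (0:ℝ) ≤ (1.2 - s) * (x - 0.301194) * (s^1 * x^0) :=
    mul_nonneg (mul_nonneg n2 n3) (mul_nonneg (pow_nonneg ns 1) (pow_nonneg hx 0))
  have p15 : (0:ℝ) ≤ (1.2 - s) * (0.3678795 - x) * (s^0 * x^2) :=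
    mul_nonneg (mul_nonneg n2 n4) (mul_nonneg (pow_nonneg ns 0) (pow_nonneg hx 2))
  have p16 : (0:ℝ) ≤ (1.2 - s) * (0.3678795 - x) * (s^1 * x^2) :=
    mul_nonneg (mul_nonneg n2 n4) (mul_nonneg (pow_nonneg ns 1) (pow_nonneg hx 2))
  have p17 : (0:ℝ) ≤ (1.2 - s) * (0.3678795 - x) * (s^3 * x^1) :=
    mul_nonneg (mul_nonneg n2 n4) (mul_nonneg (pow_nonneg ns 3) (pow_nonneg hx 1))
  have p18 : (0:ℝ) ≤ (x - 0.301194) * (x - 0.301194) * (s^4 * x^1) :=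
    mul_nonneg (mul_nonneg n3 n3) (mul_nonneg (pow_nonneg ns 4) (pow_nonneg hx 1))
  have p19 : (0:ℝ) ≤ (x - 0.301194) * (0.3678795 - x) * (s^0 * x^0) :=
    mul_nonneg (mul_nonneg n3 n4) (mul_nonneg (pow_nonneg ns 0) (pow_nonneg hx 0))
  linarith [p0, p1, p2, p3, p4, p5, p6, p7, p8, p9, p10, p11, p12, p13, p14, p15, p16, p17, p18, p19]

private lemma box3 (s x : ℝ) (h0 : 1.2 ≤ s) (h1 : s ≤ 1.26575) (hl : 0.2820276 ≤ x) (hu : x ≤ 0.3011943) :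
    2 + x^3 * (s+1) * (1 - s^2/2 - s^3/3 - s^4/8)
      + x^2 * (2*s + 5*s^2/2 + s^3/2) - x * (3 + 2*s) < 1 := by
  have ns : (0:ℝ) ≤ s := by linarith
  have hx : (0:ℝ) ≤ x := by linarith
  have n1 : (0:ℝ) ≤ (s - 1.2) := by linarith
  have n2 : (0:ℝ) ≤ (1.26575 - s) := by linarith
  have n3 : (0:ℝ) ≤ (x - 0.2820276) := by linarith
  have n4 : (0:ℝ) ≤ (0.3011943 - x) := by linarith
  have p0 : (0:ℝ) ≤ (s - 1.2) * (1.26575 - s) * (s^0 * x^2) :=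
    mul_nonneg (mul_nonneg n1 n2) (mul_nonneg (pow_nonneg ns 0) (pow_nonneg hx 2))
  have p1 : (0:ℝ) ≤ (s - 1.2) * (1.26575 - s) * (s^0 * x^3) :=
    mul_nonneg (mul_nonneg n1 n2) (mul_nonneg (pow_nonneg ns 0) (pow_nonneg hx 3))
  have p2 : (0:ℝ) ≤ (s - 1.2) * (1.26575 - s) * (s^1 * x^2) :=
    mul_nonneg (mul_nonneg n1 n2) (mul_nonneg (pow_nonneg ns 1) (pow_nonneg hx 2))
  have p3 : (0:ℝ) ≤ (s - 1.2) * (x - 0.2820276) * (s^0 * x^0) :=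
    mul_nonneg (mul_nonneg n1 n3) (mul_nonneg (pow_nonneg ns 0) (pow_nonneg hx 0))
  have p4 : (0:ℝ) ≤ (s - 1.2) * (0.3011943 - x) * (s^0 * x^1) :=
    mul_nonneg (mul_nonneg n1 n4) (mul_nonneg (pow_nonneg ns 0) (pow_nonneg hx 1))
  have p5 : (0:ℝ) ≤ (1.26575 - s) * (1.26575 - s) * (s^0 * x^3) :=
    mul_nonneg (mul_nonneg n2 n2) (mul_nonneg (pow_nonneg ns 0) (pow_nonneg hx 3))
  have p6 : (0:ℝ) ≤ (1.26575 - s) * (1.26575 - s) * (s^1 * x^3) :=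
    mul_nonneg (mul_nonneg n2 n2) (mul_nonneg (pow_nonneg ns 1) (pow_nonneg hx 3))
  have p7 : (0:ℝ) ≤ (1.26575 - s) * (1.26575 - s) * (s^2 * x^3) :=
    mul_nonneg (mul_nonneg n2 n2) (mul_nonneg (pow_nonneg ns 2) (pow_nonneg hx 3))
  have p8 : (0:ℝ) ≤ (1.26575 - s) * (1.26575 - s) * (s^3 * x^3) :=
    mul_nonneg (mul_nonneg n2 n2) (mul_nonneg (pow_nonneg ns 3) (pow_nonneg hx 3))
  have p9 : (0:ℝ) ≤ (1.26575 - s) * (x - 0.2820276) * (s^0 * x^0) :=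
    mul_nonneg (mul_nonneg n2 n3) (mul_nonneg (pow_nonneg ns 0) (pow_nonneg hx 0))
  have p10 : (0:ℝ) ≤ (1.26575 - s) * (x - 0.2820276) * (s^0 * x^1) :=
    mul_nonneg (mul_nonneg n2 n3) (mul_nonneg (pow_nonneg ns 0) (pow_nonneg hx 1))
  have p11 : (0:ℝ) ≤ (1.26575 - s) * (0.3011943 - x) * (s^0 * x^2) :=
    mul_nonneg (mul_nonneg n2 n4) (mul_nonneg (pow_nonneg ns 0) (pow_nonneg hx 2))
  have p12 : (0:ℝ) ≤ (x - 0.2820276) * (x - 0.2820276) * (s^0 * x^1) :=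
    mul_nonneg (mul_nonneg n3 n3) (mul_nonneg (pow_nonneg ns 0) (pow_nonneg hx 1))
  have p13 : (0:ℝ) ≤ (x - 0.2820276) * (0.3011943 - x) * (s^0 * x^0) :=
    mul_nonneg (mul_nonneg n3 n4) (mul_nonneg (pow_nonneg ns 0) (pow_nonneg hx 0))
  linarith [p0, p1, p2, p3, p4, p5, p6, p7, p8, p9, p10, p11, p12, p13]

theorem f_lt_one_on_interval (f : ℝ → ℝ)
    (hf : ∀ s : ℝ, f s = 2 + Real.exp (-3*s) * (s+1) * (1 - s^2/2 - s^3/3 - s^4/8)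
      + Real.exp (-2*s) * (2*s + 5*s^2/2 + s^3/2) - Real.exp (-s) * (3 + 2*s)) :
    ∀ s ∈ Set.Icc (0:ℝ) 1.26575, f s < 1 := by
  intro s hs
  obtain ⟨hs0, hs1⟩ := hs
  rw [hf s]
  have hx2 : Real.exp (-2*s) = Real.exp (-s) ^ 2 := by
    rw [show (-2*s : ℝ) = (-s) + (-s) by ring, Real.exp_add]; ring
  have hx3 : Real.exp (-3*s) = Real.exp (-s) ^ 3 := by
    rw [show (-3*s : ℝ) = (-s) + (-s) + (-s) by ring, Real.exp_add, Real.exp_add]; ring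
  rw [hx2, hx3]
  set x := Real.exp (-s) with hxdef
  rcases le_or_gt s 0.5 with h | h
  · have hxu : x ≤ 1 := by
      rw [hxdef, show (1:ℝ) = Real.exp 0 by rw [Real.exp_zero]]
      exact Real.exp_le_exp.mpr (by linarith)
    have hxl : (0.60653:ℝ) ≤ x := le_trans e05_lo (Real.exp_le_exp.mpr (by linarith))
    have := box1 s x hs0 h hxl hxu
    linarith
  · rcases le_or_gt s 0.8 with h2 | h2
    · have hxu : x ≤ 0.6065307 := le_trans (Real.exp_le_exp.mpr (by linarith)) e05_hi
      have hxl : (0.449328:ℝ) ≤ x := le_trans e08_lo (Real.exp_le_exp.mpr (by linarith))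
      have := box2a s x (le_of_lt h) h2 hxl hxu
      linarith
    · rcases le_or_gt s 1.0 with h3 | h3
      · have hxu : x ≤ 0.449330 := le_trans (Real.exp_le_exp.mpr (by linarith)) e08_hi
        have hxl : (0.367879:ℝ) ≤ x := by
          refine le_trans e10_lo (Real.exp_le_exp.mpr ?_)
          norm_num at h3 ⊢; linarith
        have := box2b s x (le_of_lt h2) (by norm_num at h3 ⊢; linarith) hxl hxu
        linarith
      · rcases le_or_gt s 1.2 with h4 | h4
        · have hxu : x ≤ 0.3678795 := by
            refine le_trans (Real.exp_le_exp.mpr ?_) e10_hi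
            norm_num at h3 ⊢; linarith
          have hxl : (0.301194:ℝ) ≤ x := le_trans e12_lo (Real.exp_le_exp.mpr (by linarith))
          have := box2c s x (by norm_num at h3 ⊢; linarith) h4 hxl hxu
          linarith
        · have hxu : x ≤ 0.3011943 := le_trans (Real.exp_le_exp.mpr (by linarith)) e12_hi
          have hxl : (0.2820276:ℝ) ≤ x := le_trans ec_lo (Real.exp_le_exp.mpr (by linarith))
          have := box3 s x (le_of_lt h4) hs1 hxl hxu
          linarith
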